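/- arXiv:0907.0208 — 5 statements merged into one kernel-verified Lean document; each statement's English description precedes it below -/
import Mathlib

section
/- Let d ≥ 1 and let Θ ⊆ ℝ^d be an open set that is closed under multiplication by positive real scalars. Let v₀ : ℝ^d → ℝ be a linear functional. If there exists w ∈ Θ ∩ ℤ^d with v₀(w) = 0, and there exists u ∈ ℤ^d with v₀(u) = 1, then there exists t ∈ Θ ∩ ℤ^d with v₀(t) = 1. -/
theorem cone_lattice_level_one (d : ℕ) (hd : 1 ≤ d)
    (Θ : Set (Fin d → ℝ)) (hopen : IsOpen Θ)
    (hcone : ∀ x ∈ Θ, ∀ lam : ℝ, 0 < lam → lam • x ∈ Θ)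
    (v₀ : (Fin d → ℝ) →ₗ[ℝ] ℝ)
    (hw : ∃ w : Fin d → ℤ, (fun i => (w i : ℝ)) ∈ Θ ∧ v₀ (fun i => (w i : ℝ)) = 0)
    (hu : ∃ u : Fin d → ℤ, v₀ (fun i => (u i : ℝ)) = 1) :
    ∃ t : Fin d → ℤ, (fun i => (t i : ℝ)) ∈ Θ ∧ v₀ (fun i => (t i : ℝ)) = 1 := by
  obtain ⟨w, hwΘ, hw0⟩ := hw
  obtain ⟨u, hu1⟩ := hu
  set w' : Fin d → ℝ := fun i => (w i : ℝ)
  set u' : Fin d → ℝ := fun i => (u i : ℝ)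
  have htend : Filter.Tendsto (fun n : ℕ => w' + ((n : ℝ) + 1)⁻¹ • u')
      Filter.atTop (nhds w') := by
    have h0 : Filter.Tendsto (fun n : ℕ => ((n : ℝ) + 1)⁻¹) Filter.atTop (nhds 0) :=
      tendsto_one_div_add_atTop_nhds_zero_nat.congr (by intro n; simp [one_div])
    have := ((h0.smul_const u').const_add w')
    simpa using this
  have hev : ∀ᶠ n : ℕ in Filter.atTop, w' + ((n : ℝ) + 1)⁻¹ • u' ∈ Θ :=
    htend.eventually (hopen.mem_nhds hwΘ)
  obtain ⟨n, hn⟩ := hev.exists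
  have hpos : (0 : ℝ) < (n : ℝ) + 1 := by positivity
  have hmem := hcone _ hn ((n : ℝ) + 1) hpos
  refine ⟨fun i => (n + 1) * w i + u i, ?_, ?_⟩
  · convert hmem using 1
    funext i
    have : ((n : ℝ) + 1) ≠ 0 := hpos.ne'
    push_cast
    simp only [Pi.smul_apply, Pi.add_apply, smul_eq_mul, w', u']
    field_simp
  · have : (fun i => (((n : ℤ) + 1) * w i + u i : ℝ)) = ((n : ℝ) + 1) • w' + u' := by
      funext i; push_cast [w', u']; simp [Pi.smul_apply, smul_eq_mul]; try ring
    rw [show (fun i => ((((n:ℕ) + 1) * w i + u i : ℤ) : ℝ)) = ((n : ℝ) + 1) • w' + u' by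
      funext i; push_cast [w', u']; simp [Pi.smul_apply, smul_eq_mul]; try ring]
    simp [map_add, map_smul, hw0, hu1]
end

section
/- Let x, y, z ∈ ℤ³ with det[x y z] = 1 (columns x, y, z). For integers s₁, s₂, s₃, put t = s₁·x + s₂·y + s₃·z. Then there exists u ∈ ℤ³ with det[x t u] = 1 if and only if gcd(s₂, s₃) = 1. -/
/-- Determinant of the 3×3 integer matrix with columns `a`, `b`, `c`. -/
def det3 (a b c : Fin 3 → ℤ) : ℤ := Matrix.det (Matrix.transpose (Matrix.of ![a, b, c]))

theorem delzant_condition_iff_gcd (x y z : Fin 3 → ℤ) (h : det3 x y z = 1)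
    (s₁ s₂ s₃ : ℤ) (t : Fin 3 → ℤ)
    (ht : t = fun i => s₁ * x i + s₂ * y i + s₃ * z i) :
    (∃ u : Fin 3 → ℤ, det3 x t u = 1) ↔ Int.gcd s₂ s₃ = 1 := by
  simp only [det3, Matrix.det_fin_three, Matrix.transpose_apply, Matrix.of_apply,
    Matrix.cons_val', Matrix.cons_val_zero, Matrix.cons_val_one, Matrix.head_cons,
    Matrix.cons_val_two, Matrix.tail_cons, Matrix.head_fin_const, Matrix.empty_val',
    Matrix.cons_val_fin_one] at h ⊢
  subst ht
  constructor
  · rintro ⟨u, hu⟩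
    have key : s₂ * (x 0 * y 1 * u 2 - x 0 * u 1 * y 2 - y 0 * x 1 * u 2 + y 0 * u 1 * x 2
          + u 0 * x 1 * y 2 - u 0 * y 1 * x 2)
        + s₃ * (x 0 * z 1 * u 2 - x 0 * u 1 * z 2 - z 0 * x 1 * u 2 + z 0 * u 1 * x 2
          + u 0 * x 1 * z 2 - u 0 * z 1 * x 2) = 1 := by
      linear_combination hu
    have hd : (Int.gcd s₂ s₃ : ℤ) ∣ 1 := by
      rw [← key]
      exact Dvd.dvd.add (Dvd.dvd.mul_right (Int.gcd_dvd_left s₂ s₃) _)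
        (Dvd.dvd.mul_right (Int.gcd_dvd_right s₂ s₃) _)
    exact Nat.dvd_one.mp (Int.ofNat_dvd.mp (by exact_mod_cast hd))
  · intro hg
    have hb : s₂ * Int.gcdA s₂ s₃ + s₃ * Int.gcdB s₂ s₃ = 1 := by
      have := Int.gcd_eq_gcd_ab s₂ s₃
      rw [hg] at this; exact_mod_cast this.symm
    refine ⟨fun i => Int.gcdA s₂ s₃ * z i - Int.gcdB s₂ s₃ * y i, ?_⟩
    linear_combination (s₂ * Int.gcdA s₂ s₃ + s₃ * Int.gcdB s₂ s₃) * h + hb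
end

section
/- Let n⁰, n¹, …, n^k ∈ ℝ³. Write (v × w)(3) for the third component of the cross product v × w. Suppose (n⁰ × nⁱ)(3) > 0 for every 1 ≤ i ≤ k, and (nⁱ × n^{i+1})(3) > 0 for every 0 ≤ i ≤ k−1. Then (nⁱ × n^j)(3) > 0 for all 0 ≤ i < j ≤ k. -/
/-- Third component of the cross product of two vectors in `ℝ³`. -/
def cross3 (v w : Fin 3 → ℝ) : ℝ := v 0 * w 1 - v 1 * w 0

theorem cyclic_ordering_of_projected_normals (k : ℕ) (n : ℕ → Fin 3 → ℝ)
    (h0 : ∀ i, 1 ≤ i → i ≤ k → 0 < cross3 (n 0) (n i))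
    (hsucc : ∀ i, i + 1 ≤ k → 0 < cross3 (n i) (n (i + 1))) :
    ∀ i j, i < j → j ≤ k → 0 < cross3 (n i) (n j) := by
  have key : ∀ j, j ≤ k → ∀ i, i < j → 0 < cross3 (n i) (n j) := by
    intro j
    induction j with
    | zero => intro _ i hi; omega
    | succ j ih =>
      intro hjk i hij
      rcases Nat.lt_succ_iff_lt_or_eq.mp hij with h | h
      · by_cases hi0 : i = 0
        · subst hi0; exact h0 (j + 1) (by omega) hjk
        · have h1 : 0 < cross3 (n 0) (n i) := h0 i (by omega) (by omega)
          have h2 : 0 < cross3 (n 0) (n j) := h0 j (by omega) (by omega)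
          have h3 : 0 < cross3 (n 0) (n (j + 1)) := h0 (j + 1) (by omega) hjk
          have h4 : 0 < cross3 (n i) (n j) := ih (by omega) i h
          have h5 : 0 < cross3 (n j) (n (j + 1)) := hsucc j hjk
          have hpl : cross3 (n 0) (n j) * cross3 (n i) (n (j + 1)) =
              cross3 (n 0) (n i) * cross3 (n j) (n (j + 1)) +
              cross3 (n 0) (n (j + 1)) * cross3 (n i) (n j) := by
            simp only [cross3]; ring
          nlinarith [mul_pos h1 h5, mul_pos h3 h4]
      · subst h; exact hsucc i hjk
  exact fun i j hij hjk => key j hjk i hij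
end

section
/- Let n⁰, n¹, …, n^{k+1} ∈ ℝ³ satisfy: (i) (n⁰ × nⁱ)(3) > 0 for 1 ≤ i ≤ k+1; (ii) (nⁱ × n^{i+1})(3) > 0 for 0 ≤ i ≤ k; (iii) det[nⁱ n^{i+1} n^{i+2}] > 0 for 0 ≤ i ≤ k−1. Then det[n^h nⁱ n^j] > 0 for all 0 ≤ h < i < j ≤ k+1. -/
/-- Determinant of the 3×3 real matrix with columns `a`, `b`, `c`. -/
def det3R (a b c : Fin 3 → ℝ) : ℝ := Matrix.det (Matrix.transpose (Matrix.of ![a, b, c]))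

lemma det3R_eq (a b c : Fin 3 → ℝ) :
    det3R a b c = a 0 * (b 1 * c 2 - b 2 * c 1) - b 0 * (a 1 * c 2 - a 2 * c 1)
      + c 0 * (a 1 * b 2 - a 2 * b 1) := by
  rw [det3R, Matrix.det_transpose, Matrix.det_fin_three]
  simp [Matrix.of_apply]
  ring

lemma plucker2 (a b c d : Fin 3 → ℝ) :
    cross3 a c * cross3 b d = cross3 a b * cross3 c d + cross3 a d * cross3 b c := by
  unfold cross3; ring

lemma id1 (a b c d : Fin 3 → ℝ) :
    det3R a b d * cross3 b c = det3R a b c * cross3 b d + det3R b c d * cross3 a b := by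
  rw [det3R_eq, det3R_eq, det3R_eq]; unfold cross3; ring

lemma id2 (a b c d : Fin 3 → ℝ) :
    det3R a c d * cross3 b c = det3R b c d * cross3 a c + det3R a b c * cross3 c d := by
  rw [det3R_eq, det3R_eq, det3R_eq]; unfold cross3; ring

theorem triple_determinant_positivity (k : ℕ) (n : ℕ → Fin 3 → ℝ)
    (h0 : ∀ i, 1 ≤ i → i ≤ k + 1 → 0 < cross3 (n 0) (n i))
    (hsucc : ∀ i, i + 1 ≤ k + 1 → 0 < cross3 (n i) (n (i + 1)))
    (hdet : ∀ i, i + 2 ≤ k + 1 → 0 < det3R (n i) (n (i + 1)) (n (i + 2))) :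
    ∀ h i j, h < i → i < j → j ≤ k + 1 → 0 < det3R (n h) (n i) (n j) := by
  -- Step 1: all pairwise cross products are positive
  have hc : ∀ i, i ≤ k + 1 → ∀ h, h < i → 0 < cross3 (n h) (n i) := by
    intro i
    induction i using Nat.strong_induction_on with
    | _ i IH =>
      intro hik h hhi
      rcases Nat.eq_or_lt_of_le hhi with heq | hlt
      · -- h + 1 = i
        obtain rfl : i = h + 1 := by omega
        exact hsucc h hik
      · -- h + 1 < i
        rcases Nat.eq_zero_or_pos h with rfl | hpos
        · exact h0 i (by omega) hik
        · obtain ⟨m, rfl⟩ : ∃ m, i = m + 1 := ⟨i - 1, by omega⟩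
          have h1 : 0 < cross3 (n 0) (n m) := h0 m (by omega) (by omega)
          have h2 : 0 < cross3 (n 0) (n h) := h0 h (by omega) (by omega)
          have h3 : 0 < cross3 (n m) (n (m + 1)) := hsucc m (by omega)
          have h4 : 0 < cross3 (n 0) (n (m + 1)) := h0 (m + 1) (by omega) (by omega)
          have h5 : 0 < cross3 (n h) (n m) := IH m (by omega) (by omega) h (by omega)
          have hid := plucker2 (n 0) (n h) (n m) (n (m + 1))
          nlinarith
  -- Step 2: strong induction on j - h
  have main : ∀ d h i j, j - h ≤ d → h < i → i < j → j ≤ k + 1 →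
      0 < det3R (n h) (n i) (n j) := by
    intro d
    induction d with
    | zero => intro h i j hd h1 h2 _; omega
    | succ d IH =>
      intro h i j hd h1 h2 hj
      rcases Nat.lt_or_ge (j - h) (d + 1) with hlt | hge
      · exact IH h i j (by omega) h1 h2 hj
      · have hdh : j - h = d + 1 := by omega
        rcases Nat.eq_or_lt_of_le h2 with heq | hilt
        · -- j = i + 1
          obtain rfl : j = i + 1 := by omega
          rcases Nat.eq_or_lt_of_le h1 with heq2 | hhlt
          · obtain rfl : i = h + 1 := by omega
            exact hdet h (by omega)
          · -- h + 1 < i : use id2 with b = n (i-1)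
            obtain ⟨m, rfl⟩ : ∃ m, i = m + 1 := ⟨i - 1, by omega⟩
            have hA : 0 < det3R (n m) (n (m + 1)) (n (m + 1 + 1)) :=
              IH m (m + 1) (m + 1 + 1) (by omega) (by omega) (by omega) (by omega)
            have hB : 0 < det3R (n h) (n m) (n (m + 1)) :=
              IH h m (m + 1) (by omega) (by omega) (by omega) (by omega)
            have c1 : 0 < cross3 (n m) (n (m + 1)) := hc (m + 1) (by omega) m (by omega)
            have c2 : 0 < cross3 (n h) (n (m + 1)) := hc (m + 1) (by omega) h (by omega)
            have c3 : 0 < cross3 (n (m + 1)) (n (m + 1 + 1)) :=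
              hc (m + 1 + 1) (by omega) (m + 1) (by omega)
            have hid := id2 (n h) (n m) (n (m + 1)) (n (m + 1 + 1))
            nlinarith
        · -- j > i + 1 : use id1 with c = n (i+1)
          have hA : 0 < det3R (n h) (n i) (n (i + 1)) :=
            IH h i (i + 1) (by omega) (by omega) (by omega) (by omega)
          have hB : 0 < det3R (n i) (n (i + 1)) (n j) :=
            IH i (i + 1) j (by omega) (by omega) (by omega) (by omega)
          have c1 : 0 < cross3 (n i) (n (i + 1)) := hc (i + 1) (by omega) i (by omega)
          have c2 : 0 < cross3 (n i) (n j) := hc j hj i (by omega)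
          have c3 : 0 < cross3 (n h) (n i) := hc i (by omega) h (by omega)
          have hid := id1 (n h) (n i) (n (i + 1)) (n j)
          nlinarith
  intro h i j h1 h2 h3
  exact main (j - h) h i j le_rfl h1 h2 h3
end

section
/- Let H = {v ∈ ℝ² : det[w v] > 0} be an open half-plane determined by a nonzero vector w ∈ ℝ², and let v¹, v², v³ ∈ H with v¹ and v³ linearly independent. Let g₁, g₂ : ℝ² → ℝ be linear functionals with g₁(v¹) < 0, g₁(v²) = 0, g₁(v³) > 0, and g₂(v¹) > 0, g₂(v³) > 0. Then g₂(v²) > 0. -/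
/-- The 2×2 determinant `det[w v] = w₁v₂ − w₂v₁`. -/
def det2 (w v : Fin 2 → ℝ) : ℝ := w 0 * v 1 - w 1 * v 0

theorem halfplane_separation (w v₁ v₂ v₃ : Fin 2 → ℝ) (hw : w ≠ 0)
    (hv₁ : 0 < det2 w v₁) (hv₂ : 0 < det2 w v₂) (hv₃ : 0 < det2 w v₃)
    (hindep : LinearIndependent ℝ ![v₁, v₃])
    (g₁ g₂ : (Fin 2 → ℝ) →ₗ[ℝ] ℝ)
    (hg₁₁ : g₁ v₁ < 0) (hg₁₂ : g₁ v₂ = 0) (hg₁₃ : 0 < g₁ v₃)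
    (hg₂₁ : 0 < g₂ v₁) (hg₂₃ : 0 < g₂ v₃) :
    0 < g₂ v₂ := by
  -- d ≠ 0 from linear independence
  have hd : det2 v₁ v₃ ≠ 0 := by
    have h := Matrix.linearIndependent_rows_iff_isUnit.mp
      (show LinearIndependent ℝ (fun i => (Matrix.of ![v₁, v₃]) i) from hindep)
    have hdet := (h.map (Matrix.detMonoidHom (n := Fin 2) (R := ℝ))).ne_zero
    rw [Matrix.coe_detMonoidHom, Matrix.det_fin_two] at hdet
    simpa [det2] using hdet
  set d := det2 v₁ v₃ with hdd
  set a := det2 v₂ v₃ with ha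
  set b := det2 v₁ v₂ with hb
  -- Cramer identity: d • v₂ = a • v₁ + b • v₃
  have hcram : d • v₂ = a • v₁ + b • v₃ := by
    funext i
    fin_cases i <;> simp [hdd, ha, hb, det2] <;> ring
  have hdet : d * det2 w v₂ = a * det2 w v₁ + b * det2 w v₃ := by
    simp [hdd, ha, hb, det2]; ring
  have hG₁ : a * g₁ v₁ + b * g₁ v₃ = 0 := by
    have := congrArg g₁ hcram
    simp only [map_smul, map_add, smul_eq_mul] at this
    rw [hg₁₂, mul_zero] at this
    linarith
  have hG₂ : d * g₂ v₂ = a * g₂ v₁ + b * g₂ v₃ := by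
    have := congrArg g₂ hcram
    simpa only [map_smul, map_add, smul_eq_mul] using this
  rcases hd.lt_or_gt with hneg | hpos
  · -- d < 0 ⇒ b < 0 and a < 0
    have hb0 : b < 0 := by
      by_contra h; push_neg at h
      have ha0 : 0 ≤ a := by nlinarith [mul_nonneg h hg₁₃.le]
      nlinarith [mul_nonneg ha0 hv₁.le, mul_nonneg h hv₃.le, mul_pos hv₂ (neg_pos.mpr hneg)]
    have ha0 : a < 0 := by nlinarith [mul_pos (neg_pos.mpr hb0) hg₁₃]
    nlinarith [mul_pos (neg_pos.mpr ha0) hg₂₁, mul_pos (neg_pos.mpr hb0) hg₂₃,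
      mul_pos (neg_pos.mpr hneg) hg₂₃]
  · -- d > 0 ⇒ b > 0 and a > 0
    have hb0 : 0 < b := by
      by_contra h; push_neg at h
      have ha0 : a ≤ 0 := by nlinarith [mul_nonneg (neg_nonneg.mpr h) hg₁₃.le]
      nlinarith [mul_nonneg (neg_nonneg.mpr ha0) hv₁.le,
        mul_nonneg (neg_nonneg.mpr h) hv₃.le, mul_pos hv₂ hpos]
    have ha0 : 0 < a := by nlinarith [mul_pos hb0 hg₁₃]
    nlinarith [mul_pos ha0 hg₂₁, mul_pos hb0 hg₂₃, mul_pos hpos hg₂₃]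
end
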